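/- Let E ⊂ ℝ be an interval and g: E → ℝ a function such that for every x ∈ E, the upper derivative |D⁺g(x)| := limsup_{y→x} |g(x) − g(y)|/|x − y| satisfies |D⁺g(x)| ≤ M. Then the outer Lebesgue measure of g(E) is at most M times the length of E. -/

import Mathlib

open Filter ENNReal

lemma lipOfLocal (a b : ℝ) (g : ℝ → ℝ) (K : ℝ)
    (h : ∀ x ∈ Set.Icc a b, ∀ᶠ y in nhdsWithin x (Set.Icc a b \ {x}),
      |g x - g y| ≤ K * |x - y|) :
    ∀ x ∈ Set.Icc a b, ∀ y ∈ Set.Icc a b, x ≤ y → |g y - g x| ≤ K * (y - x) := by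
  intro x hx y hy hxy
  set S : Set ℝ := {t | t ∈ Set.Icc x y ∧ |g t - g x| ≤ K * (t - x)} with hSdef
  have hxS : x ∈ S := ⟨⟨le_refl x, hxy⟩, by simp⟩
  have hbdd : BddAbove S := ⟨y, fun t ht => ht.1.2⟩
  have hne : S.Nonempty := ⟨x, hxS⟩
  set c := sSup S with hc
  have hcy : c ≤ y := csSup_le hne fun t ht => ht.1.2
  have hxc : x ≤ c := le_csSup hbdd hxS
  have hcab : c ∈ Set.Icc a b := ⟨hx.1.trans hxc, hcy.trans hy.2⟩
  have hev := h c hcab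
  rw [Filter.eventually_iff, Metric.mem_nhdsWithin_iff] at hev
  obtain ⟨δ, hδ, hball⟩ := hev
  have hcS : c ∈ S := by
    obtain ⟨t, htS, ht⟩ := exists_lt_of_lt_csSup hne (by linarith : c - δ < c)
    have htc : t ≤ c := le_csSup hbdd htS
    rcases eq_or_lt_of_le htc with heq | hlt
    · rwa [heq] at htS
    · have htmem : t ∈ Metric.ball c δ ∩ (Set.Icc a b \ {c}) := by
        constructor
        · rw [Metric.mem_ball, Real.dist_eq, abs_of_nonpos (by linarith)]
          linarith
        · exact ⟨⟨hx.1.trans htS.1.1, (htS.1.2).trans hy.2⟩, fun hs => by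
            simp only [Set.mem_singleton_iff] at hs; linarith⟩
      have h1 : |g c - g t| ≤ K * |c - t| := hball htmem
      rw [abs_of_nonneg (by linarith : (0:ℝ) ≤ c - t)] at h1
      refine ⟨⟨hxc, hcy⟩, ?_⟩
      have h2 := htS.2
      calc |g c - g x| ≤ |g c - g t| + |g t - g x| := abs_sub_le _ _ _
        _ ≤ K * (c - t) + K * (t - x) := add_le_add h1 h2
        _ = K * (c - x) := by ring
  have hcyeq : c = y := by
    by_contra hne'
    have hclty : c < y := lt_of_le_of_ne hcy hne'
    set t := min y (c + δ / 2) with htdef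
    have htc : c < t := lt_min hclty (by linarith)
    have hty : t ≤ y := min_le_left _ _
    have htmem : t ∈ Metric.ball c δ ∩ (Set.Icc a b \ {c}) := by
      constructor
      · rw [Metric.mem_ball, Real.dist_eq, abs_of_nonneg (by linarith)]
        have : t ≤ c + δ / 2 := min_le_right _ _
        linarith
      · exact ⟨⟨hx.1.trans (hxc.trans htc.le), hty.trans hy.2⟩, fun hs => by
          simp only [Set.mem_singleton_iff] at hs; linarith⟩
    have h1 : |g c - g t| ≤ K * |c - t| := hball htmem
    rw [abs_of_nonpos (by linarith : c - t ≤ 0)] at h1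
    have htS : t ∈ S := by
      refine ⟨⟨hxc.trans htc.le, hty⟩, ?_⟩
      calc |g t - g x| ≤ |g t - g c| + |g c - g x| := abs_sub_le _ _ _
        _ ≤ K * (t - c) + K * (c - x) := by
            rw [abs_sub_comm] at h1
            exact add_le_add (by linarith) hcS.2
        _ = K * (t - x) := by ring
    have := le_csSup hbdd htS
    linarith
  rw [← hcyeq]
  exact hcS.2

/-- If `g` on an interval `E = [a,b]` has upper derivative bounded by `M` at every
point, then the outer Lebesgue measure of `g(E)` is at most `M` times the length of `E`. -/
theorem stmt12 (a b : ℝ) (hab : a ≤ b) (g : ℝ → ℝ) (M : ℝ)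
    (h : ∀ x ∈ Set.Icc a b, ∀ ε > (0 : ℝ),
      ∀ᶠ y in nhdsWithin x (Set.Icc a b \ {x}), |g x - g y| ≤ (M + ε) * |x - y|) :
    MeasureTheory.volume (g '' Set.Icc a b) ≤ ENNReal.ofReal (M * (b - a)) := by
  -- key bound: for every ε > 0, the image has measure ≤ ofReal ((M+ε)*(b-a))
  have key : ∀ ε > (0:ℝ), MeasureTheory.volume (g '' Set.Icc a b)
      ≤ ENNReal.ofReal ((M + ε) * (b - a)) := by
    intro ε hε
    rcases eq_or_lt_of_le hab with heq | hlt
    · subst heq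
      rw [Set.Icc_self, Set.image_singleton, Real.volume_singleton]
      exact zero_le
    have hlip := lipOfLocal a b g (M + ε) (fun x hx => h x hx ε hε)
    have hdiam : EMetric.diam (g '' Set.Icc a b) ≤ ENNReal.ofReal ((M + ε) * (b - a)) := by
      apply EMetric.diam_le
      rintro _ ⟨u, hu, rfl⟩ _ ⟨v, hv, rfl⟩
      rw [edist_dist, Real.dist_eq]
      apply ENNReal.ofReal_le_ofReal
      have hK : 0 ≤ M + ε := by
        have h1 := hlip a (Set.left_mem_Icc.2 hab) b (Set.right_mem_Icc.2 hab) hab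
        nlinarith [abs_nonneg (g b - g a)]
      rcases le_total u v with huv | huv
      · rw [abs_sub_comm]
        calc |g v - g u| ≤ (M + ε) * (v - u) := hlip u hu v hv huv
          _ ≤ (M + ε) * (b - a) := by nlinarith [hu.1, hv.2]
      · calc |g u - g v| ≤ (M + ε) * (u - v) := hlip v hv u hu huv
          _ ≤ (M + ε) * (b - a) := by nlinarith [hv.1, hu.2]
    exact le_trans (Real.volume_le_diam _) hdiam
  -- now let ε → 0
  have hfin : MeasureTheory.volume (g '' Set.Icc a b) ≠ ⊤ :=
    ne_top_of_le_ne_top ENNReal.ofReal_ne_top (key 1 one_pos)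
  refine ENNReal.le_of_forall_pos_le_add fun δ hδ _ => ?_
  set ε : ℝ := δ / (b - a + 1) with hεdef
  have hε : 0 < ε := div_pos hδ (by linarith)
  calc MeasureTheory.volume (g '' Set.Icc a b)
      ≤ ENNReal.ofReal ((M + ε) * (b - a)) := key ε hε
    _ = ENNReal.ofReal (M * (b - a) + ε * (b - a)) := by ring_nf
    _ ≤ ENNReal.ofReal (M * (b - a)) + ENNReal.ofReal (ε * (b - a)) :=
        ENNReal.ofReal_add_le
    _ ≤ ENNReal.ofReal (M * (b - a)) + δ := by
        gcongr
        calc ENNReal.ofReal (ε * (b - a)) ≤ ENNReal.ofReal (δ : ℝ) := by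
              apply ENNReal.ofReal_le_ofReal
              rw [hεdef]
              have h1 : (0:ℝ) < b - a + 1 := by linarith
              rw [div_mul_eq_mul_div, div_le_iff₀ h1]
              nlinarith [δ.coe_nonneg]
          _ = (δ : ℝ≥0∞) := ENNReal.ofReal_coe_nnreal
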